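/- Let d ≥ 2 be an integer, let p ∈ [1, ∞], let X be a finite subset of ℝ^d equipped with the ℓ_p metric, and let ε ∈ (0, 1). Set c_d = d·(2·7^{d−1}·d^{(d−1)/4 + 1})^{d+1} and β = c_d·ε^{−(d²−1)/2}. Then there exists a family of simple graphs (H_r)_{r ≥ 0} on vertex set X, monotone in r (i.e., H_r is a subgraph of H_s whenever r ≤ s), such that for every r ≥ 0: (i) G(X)_r is a subgraph of H_r and H_r is a subgraph of G(X)_{(1+ε)r}, where G(X)_r denotes the r-neighborhood graph of X in the ℓ_p metric; and (ii) H_r has at most |X|^β maximal cliques. -/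

import Mathlib

open Finset

noncomputable section Stmt15Aux

namespace Stmt15

variable {d : ℕ} {p : ENNReal} [Fact (1 ≤ p)]

abbrev E (d : ℕ) (p : ENNReal) := PiLp p (fun _ : Fin d => ℝ)

/-- linear functional given by coefficient vector -/
def sF (u : Fin d → ℝ) (x : E d p) : ℝ := ∑ i, u i * x i

def eb (d : ℕ) (p : ENNReal) (i : Fin d) : E d p :=
  (WithLp.equiv p (Fin d → ℝ)).symm (Pi.single i 1)

lemma eb_norm (i : Fin d) : ‖eb d p i‖ = 1 := by
  rw [eb, WithLp.equiv_symm_apply, PiLp.norm_toLp_single]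
  simp

lemma repr_eq (x : E d p) : x = ∑ i, x i • eb d p i := by
  apply (WithLp.linearEquiv p ℝ (Fin d → ℝ)).injective
  rw [map_sum]
  funext j
  rw [Finset.sum_apply]
  simp only [map_smul, eb, WithLp.linearEquiv_apply, WithLp.equiv_symm_apply, PiLp.toLp_apply,
    Equiv.apply_symm_apply, Pi.smul_apply, smul_eq_mul]
  rw [Finset.sum_eq_single j]
  · simp
  · intro i _ hij
    simp [Pi.single_eq_of_ne' hij]
    intro h; exact absurd h.symm hij
  · simp

lemma clm_eq_sF (g : E d p →L[ℝ] ℝ) (x : E d p) :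
    g x = sF (fun i => g (eb d p i)) x := by
  conv_lhs => rw [repr_eq x]
  rw [map_sum, sF]
  refine Finset.sum_congr rfl fun i _ => ?_
  rw [map_smul, smul_eq_mul, mul_comm]

lemma coord_le_norm (x : E d p) (i : Fin d) : |x i| ≤ ‖x‖ := by
  have h1 : (1:ENNReal) ≤ p := Fact.out
  rcases eq_or_ne p ⊤ with hp | hp
  · subst hp
    have : ‖x i‖ ≤ ⨆ j, ‖x j‖ :=
      le_ciSup (f := fun j => ‖x j‖) (Set.Finite.bddAbove (Set.finite_range _)) i
    simpa [PiLp.norm_eq_ciSup] using this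
  · have hpt : 0 < p.toReal := ENNReal.toReal_pos (by intro h; rw [h] at h1; simp at h1) hp
    rw [PiLp.norm_eq_sum hpt]
    have hle : |x i| ^ p.toReal ≤ ∑ j, ‖x j‖ ^ p.toReal := by
      refine Finset.single_le_sum (f := fun j => ‖x j‖ ^ p.toReal) ?_ (Finset.mem_univ i)
      intro j _
      positivity
    have := Real.rpow_le_rpow (by positivity) hle (by positivity : 0 ≤ 1 / p.toReal)
    calc |x i| = (|x i| ^ p.toReal) ^ (1 / p.toReal) := by
          rw [← Real.rpow_mul (abs_nonneg _), mul_one_div, div_self hpt.ne', Real.rpow_one]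
      _ ≤ (∑ j, ‖x j‖ ^ p.toReal) ^ (1 / p.toReal) := this

lemma sF_sub (u : Fin d → ℝ) (x y : E d p) : sF u (x - y) = sF u x - sF u y := by
  simp [sF, PiLp.sub_apply, mul_sub, Finset.sum_sub_distrib]

/-- the approximating graph -/
def Hgr (U : Finset (Fin d → ℝ)) (X : Finset (E d p)) (c : ℝ) :
    SimpleGraph {x // x ∈ X} where
  Adj a b := a ≠ b ∧ ∀ u ∈ U, |sF u a.1 - sF u b.1| ≤ c
  symm := ⟨by
    rintro a b ⟨hab, h⟩
    exact ⟨hab.symm, fun u hu => by rw [abs_sub_comm]; exact h u hu⟩⟩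
  loopless := ⟨fun a h => h.1 rfl⟩

lemma Hgr_mono (U : Finset (Fin d → ℝ)) (X : Finset (E d p)) {c c' : ℝ} (h : c ≤ c') :
    Hgr U X c ≤ Hgr U X c' := by
  rintro a b ⟨hab, hb⟩
  exact ⟨hab, fun u hu => (hb u hu).trans h⟩

lemma norm_le_sum_abs (x : E d p) : ‖x‖ ≤ ∑ i, |x i| := by
  conv_lhs => rw [repr_eq x]
  refine (norm_sum_le _ _).trans ?_
  refine Finset.sum_le_sum fun i _ => ?_
  rw [norm_smul, eb_norm, mul_one, Real.norm_eq_abs]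

lemma card_maximal_cliques (U : Finset (Fin d → ℝ)) (X : Finset (E d p)) {c : ℝ}
    (hc : 0 ≤ c) :
    ({S : Set {x // x ∈ X} | S.Nonempty ∧ (Hgr U X c).IsClique S ∧
        ∀ T : Set {x // x ∈ X}, (Hgr U X c).IsClique T → S ⊆ T → S = T}).ncard
      ≤ X.card ^ U.card := by
  classical
  rcases isEmpty_or_nonempty {x // x ∈ X} with hempty | hne'
  · have hemp : ({S : Set {x // x ∈ X} | S.Nonempty ∧ (Hgr U X c).IsClique S ∧
        ∀ T : Set {x // x ∈ X}, (Hgr U X c).IsClique T → S ⊆ T → S = T}) = ∅ := by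
      ext S
      simp only [Set.mem_setOf_eq, Set.mem_empty_iff_false, iff_false, not_and]
      rintro ⟨a, _⟩
      exact isEmptyElim a
    rw [hemp]
    simp
  set G := Hgr U X c with hG
  set M := {S : Set {x // x ∈ X} | S.Nonempty ∧ G.IsClique S ∧
      ∀ T : Set {x // x ∈ X}, G.IsClique T → S ⊆ T → S = T} with hM
  have key : ∀ S : Set {x // x ∈ X}, S ∈ M → ∀ u : Fin d → ℝ,
      ∃ a ∈ S, ∀ b ∈ S, sF u b.1 ≤ sF u a.1 := fun S hS u =>
    Set.exists_max_image S (fun a => sF u a.1) (Set.toFinite S) hS.1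
  choose! f hf1 hf2 using key
  -- each maximal clique is recovered from its maximizers
  have hrecover : ∀ S ∈ M, S = {y : {x // x ∈ X} |
      ∀ u : {u // u ∈ U}, sF u.1 y.1 ≤ sF u.1 (f S u.1).1 ∧
        sF u.1 (f S u.1).1 - c ≤ sF u.1 y.1} := by
    intro S hS
    obtain ⟨hne, hcl, hmax⟩ := hS
    refine hmax _ ?_ ?_
    · -- clique
      rintro y hy z hz hyz
      refine ⟨hyz, fun u hu => ?_⟩
      obtain ⟨hy1, hy2⟩ := hy ⟨u, hu⟩
      obtain ⟨hz1, hz2⟩ := hz ⟨u, hu⟩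
      rw [abs_sub_le_iff]
      constructor <;> linarith
    · -- subset
      intro y hy
      intro u
      have hmem := hf1 S ⟨hne, hcl, hmax⟩ u.1
      refine ⟨hf2 S ⟨hne, hcl, hmax⟩ u.1 y hy, ?_⟩
      rcases eq_or_ne (f S u.1) y with h | h
      · rw [h]; linarith
      · have hadj := hcl hmem hy h
        rw [hG] at hadj
        have := (le_abs_self _).trans (hadj.2 u.1 u.2)
        linarith
  -- injectivity
  have hinj : Function.Injective
      (fun S : M => (fun u : {u // u ∈ U} => f S.1 u.1 : {u // u ∈ U} → {x // x ∈ X})) := by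
    rintro ⟨S, hS⟩ ⟨S', hS'⟩ hEq
    simp only [Subtype.mk.injEq]
    rw [hrecover S hS, hrecover S' hS']
    have : ∀ u : {u // u ∈ U}, f S u.1 = f S' u.1 := fun u => congrFun hEq u
    ext y
    simp only [Set.mem_setOf_eq]
    constructor <;> intro hy u <;> [rw [← this u]; rw [this u]] <;> exact hy u
  have h1 : M.ncard = Nat.card M := (Nat.card_coe_set_eq M).symm
  rw [h1]
  calc Nat.card M ≤ Nat.card ({u // u ∈ U} → {x // x ∈ X}) :=
        Nat.card_le_card_of_injective _ hinj
    _ = X.card ^ U.card := by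
        rw [Nat.card_eq_fintype_card, Fintype.card_fun]
        congr 1 <;> exact Fintype.card_coe _

lemma sF_smul (u : Fin d → ℝ) (t : ℝ) (x : E d p) : sF u (t • x) = t * sF u x := by
  simp only [sF, PiLp.smul_apply, smul_eq_mul, Finset.mul_sum]
  exact Finset.sum_congr rfl fun i _ => by ring

lemma sum_abs_le_dim_mul_norm (w : E d p) : ∑ i, |w i| ≤ (d : ℝ) * ‖w‖ := by
  calc ∑ i, |w i| ≤ ∑ _i : Fin d, ‖w‖ := Finset.sum_le_sum fun i _ => coord_le_norm w i
    _ = (d : ℝ) * ‖w‖ := by simp [mul_comm]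

lemma exists_dual_coords (v : E d p) (hv : v ≠ 0) :
    ∃ a : Fin d → ℝ, (∀ i, |a i| ≤ 1) ∧ (∀ w : E d p, |sF a w| ≤ ‖w‖) ∧ sF a v = ‖v‖ := by
  obtain ⟨g, hg1, hgv⟩ := exists_dual_vector ℝ v (norm_ne_zero_iff.mpr hv)
  refine ⟨fun i => g (eb d p i), fun i => ?_, fun w => ?_, ?_⟩
  · calc |g (eb d p i)| = ‖g (eb d p i)‖ := (Real.norm_eq_abs _).symm
      _ ≤ ‖g‖ * ‖eb d p i‖ := g.le_opNorm _
      _ = 1 := by rw [hg1, eb_norm, one_mul]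
  · calc |sF (fun i => g (eb d p i)) w| = ‖g w‖ := by rw [← clm_eq_sF, Real.norm_eq_abs]
      _ ≤ ‖g‖ * ‖w‖ := g.le_opNorm w
      _ = ‖w‖ := by rw [hg1, one_mul]
  · rw [← clm_eq_sF]
    exact_mod_cast hgv

open Classical in
/-- dual coefficient vector, defined for every vector -/
def Adual (v : E d p) : Fin d → ℝ :=
  if h : v ≠ 0 then (exists_dual_coords v h).choose else 0

lemma Adual_bd (v : E d p) (i : Fin d) : |Adual v i| ≤ 1 := by
  classical
  by_cases h : v ≠ 0
  · rw [Adual, dif_pos h]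
    exact (exists_dual_coords v h).choose_spec.1 i
  · rw [Adual, dif_neg h]
    simp

lemma Adual_op (v : E d p) (w : E d p) : |sF (Adual v) w| ≤ ‖w‖ := by
  classical
  by_cases h : v ≠ 0
  · rw [Adual, dif_pos h]
    exact (exists_dual_coords v h).choose_spec.2.1 w
  · rw [Adual, dif_neg h]
    simp [sF]

lemma Adual_self (v : E d p) (hv : v ≠ 0) : sF (Adual v) v = ‖v‖ := by
  classical
  rw [Adual, dif_pos hv]
  exact (exists_dual_coords v hv).choose_spec.2.2

lemma abs_cos_sub_cos_le (a b : ℝ) : |Real.cos a - Real.cos b| ≤ |a - b| := by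
  rw [Real.cos_sub_cos]
  rw [abs_mul, abs_mul]
  calc |(-2 : ℝ)| * |Real.sin ((a + b) / 2)| * |Real.sin ((a - b) / 2)|
      ≤ 2 * 1 * |(a - b) / 2| := by
        apply mul_le_mul
        · apply mul_le_mul (by simp [abs_of_nonneg]) (Real.abs_sin_le_one _) (abs_nonneg _)
            (by norm_num)
        · exact Real.abs_sin_le_abs
        · exact abs_nonneg _
        · norm_num
    _ = |a - b| := by rw [abs_div, abs_two]; ring

lemma abs_sin_sub_sin_le (a b : ℝ) : |Real.sin a - Real.sin b| ≤ |a - b| := by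
  rw [Real.sin_sub_sin]
  rw [abs_mul, abs_mul]
  calc |(2 : ℝ)| * |Real.sin ((a - b) / 2)| * |Real.cos ((a + b) / 2)|
      ≤ (2 * |(a - b) / 2|) * 1 := by
        apply mul_le_mul
        · apply mul_le_mul (by simp) Real.abs_sin_le_abs (abs_nonneg _) (by norm_num)
        · exact Real.abs_cos_le_one _
        · exact abs_nonneg _
        · positivity
    _ = |a - b| := by rw [abs_div, abs_two]; ring

lemma exists_good_U_grid (X : Finset (E d p)) {ε : ℝ} (hε0 : 0 < ε) (hε1 : ε < 1)
    (hd : 1 ≤ d) :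
    ∃ U : Finset (Fin d → ℝ),
      ((U.card : ℝ) ≤ (13 * (d:ℝ) / ε) ^ d) ∧
      (∀ u ∈ U, ∀ w : E d p, |sF u w| ≤ (1 + ε/4) * ‖w‖) ∧
      (∀ x ∈ X, ∀ y ∈ X, x ≠ y → ∃ u ∈ U, (1 - ε/4) * ‖x - y‖ ≤ sF u (x - y)) := by
  classical
  have hd0 : (0:ℝ) < (d:ℝ) := by exact_mod_cast hd
  set η : ℝ := ε / (4 * d) with hη
  have hηpos : 0 < η := by positivity
  set M : ℕ := ⌈4 * (d:ℝ) / ε⌉₊ + 1 with hM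
  set rnd : (Fin d → ℝ) → (Fin d → ℝ) := fun a i => η * round (a i / η) with hrnd
  set U : Finset (Fin d → ℝ) :=
    Finset.image (fun pr : E d p × E d p => rnd (Adual (pr.1 - pr.2))) (X ×ˢ X) with hU
  -- rounding error is coordinatewise at most η/2
  have hcoord : ∀ a : Fin d → ℝ, ∀ i, |rnd a i - a i| ≤ η / 2 := by
    intro a i
    have h1 : |a i / η - round (a i / η)| ≤ 1/2 := abs_sub_round _
    have : rnd a i - a i = -(η * (a i / η - round (a i / η))) := by
      field_simp [hrnd]
      simp only [hrnd]; ring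
    rw [this, abs_neg, abs_mul, abs_of_pos hηpos]
    calc η * |a i / η - round (a i / η)| ≤ η * (1/2) := by
          exact mul_le_mul_of_nonneg_left h1 hηpos.le
      _ = η / 2 := by ring
  -- the total rounding error on a functional evaluation
  have hkey : ∀ a : Fin d → ℝ, ∀ w : E d p, |sF (rnd a) w - sF a w| ≤ (ε/8) * ‖w‖ := by
    intro a w
    have h1 : sF (rnd a) w - sF a w = ∑ i, (rnd a i - a i) * w i := by
      rw [sF, sF, ← Finset.sum_sub_distrib]
      exact Finset.sum_congr rfl fun i _ => by ring
    rw [h1]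
    calc |∑ i, (rnd a i - a i) * w i| ≤ ∑ i, |(rnd a i - a i) * w i| :=
          Finset.abs_sum_le_sum_abs _ _
      _ ≤ ∑ i, (η/2) * |w i| := by
          refine Finset.sum_le_sum fun i _ => ?_
          rw [abs_mul]
          exact mul_le_mul_of_nonneg_right (hcoord a i) (abs_nonneg _)
      _ = (η/2) * ∑ i, |w i| := by rw [Finset.mul_sum]
      _ ≤ (η/2) * ((d:ℝ) * ‖w‖) := by
          exact mul_le_mul_of_nonneg_left (sum_abs_le_dim_mul_norm w) (by positivity)
      _ = (ε/8) * ‖w‖ := by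
          rw [hη]
          field_simp
          ring
  refine ⟨U, ?_, ?_, ?_⟩
  · -- cardinality
    have hsub : U ⊆ Finset.image (fun z : Fin d → ℤ => fun i => η * (z i : ℝ))
        (Fintype.piFinset fun _ : Fin d => Finset.Icc (-(M:ℤ)) (M:ℤ)) := by
      intro u hu
      rw [hU, Finset.mem_image] at hu
      obtain ⟨pr, _, hpr⟩ := hu
      rw [Finset.mem_image]
      refine ⟨fun i => round (Adual (pr.1 - pr.2) i / η), ?_, hpr⟩
      rw [Fintype.mem_piFinset]
      intro i
      rw [Finset.mem_Icc, ← abs_le]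
      have h1 : |Adual (pr.1 - pr.2) i / η| ≤ 4 * (d:ℝ) / ε := by
        rw [abs_div, abs_of_pos hηpos]
        have hb := Adual_bd (pr.1 - pr.2) i
        calc |Adual (pr.1 - pr.2) i| / η ≤ 1 / η := by gcongr
          _ = 4 * (d:ℝ) / ε := by rw [hη, one_div_div]
      have h2 : |(round (Adual (pr.1 - pr.2) i / η) : ℝ)| ≤ (M:ℝ) := by
        have h3 := abs_sub_round (Adual (pr.1 - pr.2) i / η)
        have h4 : (⌈4 * (d:ℝ) / ε⌉₊ : ℝ) ≥ 4 * (d:ℝ) / ε := Nat.le_ceil _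
        have h5 : |(round (Adual (pr.1 - pr.2) i / η) : ℝ)| ≤
            |Adual (pr.1 - pr.2) i / η| + 1/2 := by
          have := abs_sub_abs_le_abs_sub (round (Adual (pr.1 - pr.2) i / η) : ℝ)
            (Adual (pr.1 - pr.2) i / η)
          rw [abs_sub_comm] at h3
          linarith
        rw [hM]
        push_cast
        linarith
      exact_mod_cast h2
    calc (U.card : ℝ) ≤ ((Fintype.piFinset fun _ : Fin d =>
            Finset.Icc (-(M:ℤ)) (M:ℤ)).card : ℝ) := by
          exact_mod_cast (Finset.card_le_card hsub).trans Finset.card_image_le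
      _ = ((2*M+1 : ℕ) : ℝ) ^ d := by
          have hc2 : (Fintype.piFinset fun _ : Fin d => Finset.Icc (-(M:ℤ)) (M:ℤ)).card
              = (2*M+1)^d := by
            rw [Fintype.card_piFinset]
            have h6 : (Finset.Icc (-(M:ℤ)) (M:ℤ)).card = 2*M+1 := by
              rw [Int.card_Icc]
              omega
            rw [Finset.prod_congr rfl fun i _ => h6, Finset.prod_const, Finset.card_univ,
              Fintype.card_fin]
          rw [hc2]
          push_cast
          ring
      _ ≤ (13 * (d:ℝ) / ε) ^ d := by
          apply pow_le_pow_left₀ (by positivity)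
          have hceil : (⌈4 * (d:ℝ) / ε⌉₊ : ℝ) < 4 * (d:ℝ) / ε + 1 :=
            Nat.ceil_lt_add_one (by positivity)
          have hM' : (M : ℝ) < 4 * (d:ℝ) / ε + 2 := by
            rw [hM]
            push_cast
            linarith
          have hd1 : (1:ℝ) ≤ (d:ℝ) := by exact_mod_cast hd
          have hM2 : (M:ℝ) * ε < 4 * (d:ℝ) + 2 * ε := by
            calc (M:ℝ) * ε < (4 * (d:ℝ)/ε + 2) * ε := mul_lt_mul_of_pos_right hM' hε0
              _ = 4 * (d:ℝ) + 2 * ε := by field_simp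
          rw [le_div_iff₀ hε0]
          have hcast : ((2*M+1 : ℕ):ℝ) = 2*(M:ℝ)+1 := by push_cast; ring
          rw [hcast]
          nlinarith [hM2, hε0, hε1, hd1]
  · -- operator bound
    intro u hu w
    rw [hU, Finset.mem_image] at hu
    obtain ⟨pr, _, hpr⟩ := hu
    subst hpr
    set a := Adual (pr.1 - pr.2)
    calc |sF (rnd a) w| ≤ |sF a w| + |sF (rnd a) w - sF a w| := by
          have := abs_add_le (sF a w) (sF (rnd a) w - sF a w)
          simpa using this
      _ ≤ ‖w‖ + (ε/8) * ‖w‖ := add_le_add (Adual_op _ w) (hkey a w)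
      _ ≤ (1 + ε/4) * ‖w‖ := by nlinarith [norm_nonneg w, hε0.le]
  · -- net property
    intro x hx y hy hxy
    have hv : x - y ≠ 0 := sub_ne_zero_of_ne hxy
    refine ⟨rnd (Adual (x - y)), ?_, ?_⟩
    · rw [hU, Finset.mem_image]
      exact ⟨(x, y), Finset.mem_product.mpr ⟨hx, hy⟩, rfl⟩
    · have h1 := hkey (Adual (x - y)) (x - y)
      have h2 := Adual_self (x - y) hv
      have h3 := (abs_le.mp h1).1
      have h4 := norm_nonneg (x - y)
      rw [h2] at h3
      nlinarith [mul_nonneg hε0.le h4]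

lemma exists_good_U_two {p : ENNReal} [Fact (1 ≤ p)] (X : Finset (E 2 p)) {ε : ℝ}
    (hε0 : 0 < ε) (hε1 : ε < 1) :
    ∃ U : Finset (Fin 2 → ℝ),
      ((U.card : ℝ) ≤ 257 / ε) ∧
      (∀ u ∈ U, ∀ w : E 2 p, |sF u w| ≤ ‖w‖) ∧
      (∀ v : E 2 p, v ≠ 0 → ∃ u ∈ U, (1 - ε/4) * ‖v‖ ≤ sF u v) := by
  classical
  set m : ℕ := ⌈(256:ℝ)/ε⌉₊ with hm
  have hm1 : (256:ℝ)/ε ≤ (m:ℝ) := Nat.le_ceil _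
  have hmpos : (0:ℝ) < (m:ℝ) := lt_of_lt_of_le (by positivity) hm1
  have hm0 : 0 < m := by exact_mod_cast hmpos
  set Wv : ℝ → E 2 p := fun t =>
    (WithLp.equiv p (Fin 2 → ℝ)).symm ![Real.cos t, Real.sin t] with hWv
  have hWc : ∀ t, (Wv t) 0 = Real.cos t ∧ (Wv t) 1 = Real.sin t := by
    intro t
    constructor <;> rfl
  have hWne : ∀ t, Wv t ≠ 0 := by
    intro t h
    have h0 : Real.cos t = 0 := by
      rw [← (hWc t).1, h]; rfl
    have h1 : Real.sin t = 0 := by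
      rw [← (hWc t).2, h]; rfl
    have := Real.sin_sq_add_cos_sq t
    rw [h0, h1] at this
    norm_num at this
  set θf : ℕ → ℝ := fun k => 2 * Real.pi * k / m - Real.pi with hθf
  set U : Finset (Fin 2 → ℝ) := Finset.image (fun k => Adual (Wv (θf k))) (Finset.range m)
    with hU
  refine ⟨U, ?_, ?_, ?_⟩
  · calc (U.card : ℝ) ≤ ((Finset.range m).card : ℝ) := by
          exact_mod_cast Finset.card_image_le
      _ = (m:ℝ) := by rw [Finset.card_range]
      _ ≤ 256/ε + 1 := by
          have := Nat.ceil_lt_add_one (show (0:ℝ) ≤ 256/ε by positivity)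
          rw [hm]
          linarith
      _ ≤ 257/ε := by
          rw [div_add' _ _ _ hε0.ne', div_le_div_iff₀ hε0 hε0]
          nlinarith
  · intro u hu w
    rw [hU, Finset.mem_image] at hu
    obtain ⟨k, _, hk⟩ := hu
    rw [← hk]
    exact Adual_op _ w
  · intro v hv
    -- set up the angle
    set c : ℂ := ⟨v 0, v 1⟩ with hc
    have hcne : c ≠ 0 := by
      intro h
      apply hv
      have h0 : v 0 = 0 := congrArg Complex.re h
      have h1 : v 1 = 0 := congrArg Complex.im h
      apply (WithLp.equiv p (Fin 2 → ℝ)).injective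
      funext i
      fin_cases i <;> simp <;> assumption
    set R : ℝ := ‖c‖ with hR
    have hR0 : 0 < R := by
      rw [hR]
      exact norm_pos_iff.mpr hcne
    set θ : ℝ := Complex.arg c with hθ
    have hre : v 0 = R * Real.cos θ := by
      rw [hθ, Complex.cos_arg hcne, hR]
      field_simp
      rfl
    have him : v 1 = R * Real.sin θ := by
      rw [hθ, Complex.sin_arg, hR]
      field_simp
      rfl
    have hθlo : -Real.pi < θ := Complex.neg_pi_lt_arg c
    have hθhi : θ ≤ Real.pi := Complex.arg_le_pi c
    have hπ : (0:ℝ) < Real.pi := Real.pi_pos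
    set x : ℝ := (θ + Real.pi) * m / (2 * Real.pi) with hx
    have hx0 : 0 ≤ x := by
      apply div_nonneg _ (by positivity)
      apply mul_nonneg (by linarith) hmpos.le
    have hxm : x ≤ (m:ℝ) := by
      rw [hx, div_le_iff₀ (by positivity)]
      have : θ + Real.pi ≤ 2 * Real.pi := by linarith
      calc (θ + Real.pi) * m ≤ 2 * Real.pi * m := by
            exact mul_le_mul_of_nonneg_right this hmpos.le
        _ = (m:ℝ) * (2 * Real.pi) := by ring
    set k : ℕ := min ⌊x⌋₊ (m - 1) with hk
    have hkm : k ∈ Finset.range m := by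
      rw [Finset.mem_range, hk]
      have : m - 1 < m := Nat.sub_lt hm0 one_pos
      exact lt_of_le_of_lt (min_le_right _ _) this
    have hkx1 : (k:ℝ) ≤ x := by
      calc (k:ℝ) ≤ (⌊x⌋₊ : ℝ) := by
            exact_mod_cast min_le_left _ _
        _ ≤ x := Nat.floor_le hx0
    have hkx2 : x ≤ (k:ℝ) + 1 := by
      rcases le_or_gt (⌊x⌋₊) (m-1) with hle | hlt
      · rw [hk, min_eq_left hle]
        exact (Nat.lt_floor_add_one x).le
      · rw [hk, min_eq_right hlt.le]
        have : ((m - 1 : ℕ):ℝ) = (m:ℝ) - 1 := by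
          have : 1 ≤ m := hm0
          push_cast [Nat.cast_sub this]
          ring
        rw [this]
        linarith
    -- the chosen direction
    have hθeq : θ - θf k = (x - k) * (2 * Real.pi / m) := by
      rw [hθf, hx]
      field_simp
      ring
    have hθd : |θ - θf k| ≤ 2 * Real.pi / m := by
      rw [hθeq, abs_mul]
      rw [abs_of_nonneg (by positivity : (0:ℝ) ≤ 2*Real.pi/m)]
      calc |x - (k:ℝ)| * (2*Real.pi/m) ≤ 1 * (2*Real.pi/m) := by
            apply mul_le_mul_of_nonneg_right _ (by positivity)
            rw [abs_le]
            constructor <;> linarith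
        _ = 2*Real.pi/m := one_mul _
    set W := Wv (θf k) with hW
    set a := Adual W with ha
    -- coordinatewise error
    have hco : |v 0 - R * (W 0)| ≤ R * (2*Real.pi/m) := by
      rw [hW, (hWc (θf k)).1, hre, ← mul_sub, abs_mul, abs_of_pos hR0]
      exact mul_le_mul_of_nonneg_left ((abs_cos_sub_cos_le θ (θf k)).trans hθd) hR0.le
    have hsi : |v 1 - R * (W 1)| ≤ R * (2*Real.pi/m) := by
      rw [hW, (hWc (θf k)).2, him, ← mul_sub, abs_mul, abs_of_pos hR0]
      exact mul_le_mul_of_nonneg_left ((abs_sin_sub_sin_le θ (θf k)).trans hθd) hR0.le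
    have herr : ‖v - R • W‖ ≤ 2 * R * (2*Real.pi/m) := by
      calc ‖v - R • W‖ ≤ ∑ i, |(v - R • W) i| := norm_le_sum_abs _
        _ = |v 0 - R * (W 0)| + |v 1 - R * (W 1)| := by
            rw [Fin.sum_univ_two]
            congr 1 <;> rw [PiLp.sub_apply, PiLp.smul_apply, smul_eq_mul]
        _ ≤ 2 * R * (2*Real.pi/m) := by linarith
    have hRv : R ≤ 2 * ‖v‖ := by
      have h1 := coord_le_norm v 0
      have h2 := coord_le_norm v 1
      calc R ≤ |v 0| + |v 1| := by
            rw [hR]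
            exact (Complex.norm_le_abs_re_add_abs_im c)
        _ ≤ 2 * ‖v‖ := by linarith
    -- the main estimate
    have hWnorm : sF a (R • W) = R * ‖W‖ := by
      have hWne' : W ≠ 0 := by rw [hW]; exact hWne _
      rw [sF_smul, ha, Adual_self W hWne']
    have hsplit : sF a v = R * ‖W‖ + sF a (v - R • W) := by
      rw [← hWnorm, sF_sub]
      ring
    have htri : ‖v‖ ≤ R * ‖W‖ + ‖v - R • W‖ := by
      calc ‖v‖ = ‖(R • W) + (v - R • W)‖ := by congr 1; abel
        _ ≤ ‖R • W‖ + ‖v - R • W‖ := norm_add_le _ _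
        _ = R * ‖W‖ + ‖v - R • W‖ := by rw [norm_smul, Real.norm_eq_abs, abs_of_pos hR0]
    have hops : |sF a (v - R • W)| ≤ ‖v - R • W‖ := Adual_op _ _
    have hπ4 : Real.pi ≤ 4 := Real.pi_le_four
    have hfrac : 16 * Real.pi / m ≤ ε / 4 := by
      rw [div_le_div_iff₀ hmpos (by norm_num)]
      calc 16 * Real.pi * 4 ≤ 256 := by linarith
        _ ≤ ε * ((256:ℝ)/ε) := by
            rw [mul_div_cancel₀]
            exact hε0.ne'
        _ ≤ ε * m := by
            exact mul_le_mul_of_nonneg_left hm1 hε0.le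
    refine ⟨a, ?_, ?_⟩
    · rw [hU, Finset.mem_image]
      exact ⟨k, hkm, rfl⟩
    · have hlow : sF a v ≥ ‖v‖ - 2 * ‖v - R • W‖ := by
        have := (abs_le.mp hops).1
        linarith
      have h2e : 2 * ‖v - R • W‖ ≤ 4 * R * (2*Real.pi/m) := by linarith
      have hRpart : 4 * R * (2*Real.pi/m) ≤ (16 * Real.pi / m) * ‖v‖ := by
        calc 4 * R * (2*Real.pi/m) ≤ 4 * (2*‖v‖) * (2*Real.pi/m) := by
              apply mul_le_mul_of_nonneg_right _ (by positivity)
              linarith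
          _ = (16 * Real.pi / m) * ‖v‖ := by field_simp; ring
      have hεv : (16 * Real.pi / m) * ‖v‖ ≤ (ε/4) * ‖v‖ :=
        mul_le_mul_of_nonneg_right hfrac (norm_nonneg v)
      linarith

lemma exists_good_U (hd : 2 ≤ d) (X : Finset (E d p)) {ε : ℝ} (hε0 : 0 < ε) (hε1 : ε < 1) :
    ∃ U : Finset (Fin d → ℝ),
      ((U.card : ℝ) ≤
        (d : ℝ) * (2 * 7 ^ (d - 1) * (d : ℝ) ^ (((d : ℝ) - 1) / 4 + 1)) ^ (d + 1) *
          ε ^ (-(((d : ℝ) ^ 2 - 1) / 2))) ∧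
      (∀ u ∈ U, ∀ w : E d p, |sF u w| ≤ (1 + ε/4) * ‖w‖) ∧
      (∀ x ∈ X, ∀ y ∈ X, x ≠ y → ∃ u ∈ U, (1 - ε/4) * ‖x - y‖ ≤ sF u (x - y)) := by
  classical
  have hd1 : (1:ℝ) ≤ (d:ℝ) := by exact_mod_cast (by omega : 1 ≤ d)
  set cD : ℝ := (d : ℝ) * (2 * 7 ^ (d - 1) * (d : ℝ) ^ (((d : ℝ) - 1) / 4 + 1)) ^ (d + 1)
    with hcD
  -- basic bound : (13 d)^d ≤ cD
  have hde : (d:ℝ) ≤ (d:ℝ) ^ (((d : ℝ) - 1) / 4 + 1) := by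
    conv_lhs => rw [← Real.rpow_one (d:ℝ)]
    apply Real.rpow_le_rpow_of_exponent_le hd1
    have : (1:ℝ) ≤ (d:ℝ) := hd1
    linarith
  have h7 : (7:ℝ) ≤ 7 ^ (d - 1) := by
    calc (7:ℝ) = 7 ^ 1 := (pow_one 7).symm
      _ ≤ 7 ^ (d - 1) := by
          apply pow_le_pow_right₀ (by norm_num)
          omega
  have hA : 13 * (d:ℝ) ≤ 2 * 7 ^ (d - 1) * (d : ℝ) ^ (((d : ℝ) - 1) / 4 + 1) := by
    have h14 : (14:ℝ) ≤ 2 * 7 ^ (d-1) := by linarith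
    calc 13 * (d:ℝ) ≤ 14 * (d:ℝ) := by linarith
      _ ≤ (2 * 7 ^ (d-1)) * (d:ℝ) := by
          exact mul_le_mul_of_nonneg_right h14 (by linarith)
      _ ≤ (2 * 7 ^ (d-1)) * (d : ℝ) ^ (((d : ℝ) - 1) / 4 + 1) := by
          exact mul_le_mul_of_nonneg_left hde (by positivity)
  have h13d1 : (1:ℝ) ≤ 13 * (d:ℝ) := by linarith
  have hcDge : (13 * (d:ℝ)) ^ d ≤ cD := by
    calc (13 * (d:ℝ)) ^ d ≤ (13 * (d:ℝ)) ^ (d+1) := by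
          apply pow_le_pow_right₀ h13d1
          omega
      _ ≤ (2 * 7 ^ (d - 1) * (d : ℝ) ^ (((d : ℝ) - 1) / 4 + 1)) ^ (d+1) := by
          apply pow_le_pow_left₀ (by linarith) hA
      _ ≤ cD := by
          rw [hcD]
          apply le_mul_of_one_le_left (by positivity) hd1
  have hcD0 : 0 < cD := lt_of_lt_of_le (by positivity) hcDge
  rcases eq_or_lt_of_le hd with hd2 | hd3
  · -- dimension 2 : angular net
    subst hd2
    obtain ⟨U, hc, hop, hnet⟩ := exists_good_U_two X hε0 hε1
    refine ⟨U, ?_, ?_, ?_⟩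
    · have h1 : (257:ℝ) ≤ cD := by
        calc (257:ℝ) ≤ (13 * (2:ℕ)) ^ (2:ℕ) := by norm_num
          _ ≤ cD := by exact_mod_cast hcDge
      have h2 : ε ^ (-(1:ℝ)) ≤ ε ^ (-(((2:ℕ):ℝ) ^ 2 - 1) / 2) := by
        apply Real.rpow_le_rpow_of_exponent_ge hε0 hε1.le
        norm_num
      calc (U.card : ℝ) ≤ 257 / ε := hc
        _ = 257 * ε ^ (-(1:ℝ)) := by
            rw [Real.rpow_neg_one, div_eq_mul_inv]
        _ ≤ cD * ε ^ (-(((2:ℕ):ℝ) ^ 2 - 1) / 2) := by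
            apply mul_le_mul h1 h2 (by positivity) hcD0.le
        _ = cD * ε ^ (-((((2:ℕ):ℝ) ^ 2 - 1) / 2)) := by
            norm_num
    · intro u hu w
      have h1 := hop u hu w
      nlinarith [norm_nonneg w, hε0.le]
    · intro x hx y hy hxy
      exact hnet (x - y) (sub_ne_zero_of_ne hxy)
  · -- dimension ≥ 3 : grid net
    obtain ⟨U, hc, hop, hnet⟩ := exists_good_U_grid X hε0 hε1 (by omega)
    refine ⟨U, ?_, hop, hnet⟩
    have hd3' : (3:ℝ) ≤ (d:ℝ) := by exact_mod_cast hd3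
    have hsplitpow : (13 * (d:ℝ) / ε) ^ d = (13 * (d:ℝ)) ^ d * ε ^ (-(d:ℝ)) := by
      rw [div_pow, Real.rpow_neg hε0.le, Real.rpow_natCast, div_eq_mul_inv]
    have hexp : ε ^ (-(d:ℝ)) ≤ ε ^ (-(((d:ℝ) ^ 2 - 1) / 2)) := by
      apply Real.rpow_le_rpow_of_exponent_ge hε0 hε1.le
      nlinarith
    calc (U.card : ℝ) ≤ (13 * (d:ℝ) / ε) ^ d := hc
      _ = (13 * (d:ℝ)) ^ d * ε ^ (-(d:ℝ)) := hsplitpow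
      _ ≤ cD * ε ^ (-(((d:ℝ) ^ 2 - 1) / 2)) := by
          apply mul_le_mul hcDge hexp (by positivity) hcD0.le

end Stmt15

end Stmt15Aux

theorem stmt_15 (d : ℕ) (hd : 2 ≤ d) (p : ENNReal) [Fact (1 ≤ p)]
    (X : Finset (PiLp p (fun _ : Fin d => ℝ))) (ε : ℝ) (hε0 : 0 < ε) (hε1 : ε < 1) :
    ∃ H : ℝ → SimpleGraph {x // x ∈ X},
      (∀ r s : ℝ, 0 ≤ r → r ≤ s → H r ≤ H s) ∧
      ∀ r : ℝ, 0 ≤ r →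
        (∀ x y : {x // x ∈ X}, x ≠ y → dist x.1 y.1 ≤ 2 * r → (H r).Adj x y) ∧
        (∀ x y : {x // x ∈ X}, (H r).Adj x y → dist x.1 y.1 ≤ 2 * ((1 + ε) * r)) ∧
        ((Set.ncard {S : Set {x // x ∈ X} | S.Nonempty ∧ (H r).IsClique S ∧
            ∀ T : Set {x // x ∈ X}, (H r).IsClique T → S ⊆ T → S = T} : ℝ) ≤
          (X.card : ℝ) ^
            ((d : ℝ) * (2 * 7 ^ (d - 1) * (d : ℝ) ^ (((d : ℝ) - 1) / 4 + 1)) ^ (d + 1) *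
              ε ^ (-(((d : ℝ) ^ 2 - 1) / 2)))) := by
  classical
  obtain ⟨U, hUcard, hUbd, hUnet⟩ := Stmt15.exists_good_U hd X hε0 hε1
  set β : ℝ := (d : ℝ) * (2 * 7 ^ (d - 1) * (d : ℝ) ^ (((d : ℝ) - 1) / 4 + 1)) ^ (d + 1) *
      ε ^ (-(((d : ℝ) ^ 2 - 1) / 2)) with hβ
  refine ⟨fun r => Stmt15.Hgr U X ((1 + ε/4) * (2 * r)), ?_, ?_⟩
  · intro r s _ hrs
    refine Stmt15.Hgr_mono U X ?_
    have : 0 ≤ 1 + ε/4 := by linarith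
    nlinarith
  · intro r hr
    refine ⟨?_, ?_, ?_⟩
    · -- G_r ≤ H_r
      rintro x y hxy hdist
      refine ⟨hxy, fun u hu => ?_⟩
      have h1 : Stmt15.sF u x.1 - Stmt15.sF u y.1 = Stmt15.sF u (x.1 - y.1) :=
        (Stmt15.sF_sub u x.1 y.1).symm
      rw [h1]
      calc |Stmt15.sF u (x.1 - y.1)| ≤ (1 + ε/4) * ‖x.1 - y.1‖ := hUbd u hu _
        _ ≤ (1 + ε/4) * (2 * r) := by
            have := hdist
            rw [dist_eq_norm] at this
            have h0 : 0 ≤ 1 + ε/4 := by linarith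
            exact mul_le_mul_of_nonneg_left this h0
    · -- H_r ≤ G_{(1+ε)r}
      rintro x y ⟨hxy, hadj⟩
      have hxy1 : x.1 ≠ y.1 := fun h => hxy (Subtype.ext h)
      obtain ⟨u, hu, hlow⟩ := hUnet x.1 x.2 y.1 y.2 hxy1
      have hup : |Stmt15.sF u (x.1 - y.1)| ≤ (1 + ε/4) * (2 * r) := by
        rw [Stmt15.sF_sub]; exact hadj u hu
      have h2 : (1 - ε/4) * ‖x.1 - y.1‖ ≤ (1 + ε/4) * (2 * r) :=
        hlow.trans ((le_abs_self _).trans hup)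
      rw [dist_eq_norm]
      have hn : (0:ℝ) ≤ ‖x.1 - y.1‖ := norm_nonneg _
      nlinarith [mul_nonneg hn hε0.le, mul_nonneg (mul_nonneg hr hε0.le)
        (by linarith : (0:ℝ) ≤ 2 - ε)]
    · -- counting
      have hcount := Stmt15.card_maximal_cliques U X
        (show (0:ℝ) ≤ (1 + ε/4) * (2 * r) by positivity)
      have hXcases := Nat.eq_zero_or_pos X.card
      rcases hXcases with h0 | h1
      · -- X empty
        have hβpos : 0 < β := by
          rw [hβ]
          have h7 : (0:ℝ) < 7 ^ (d - 1) := by positivity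
          have hd0 : (0:ℝ) < (d:ℝ) := by
            have : 0 < d := by omega
            exact_mod_cast this
          positivity
        rw [h0]
        push_cast
        rw [Real.zero_rpow (ne_of_gt hβpos)]
        have : ({S : Set {x // x ∈ X} | S.Nonempty ∧ (Stmt15.Hgr U X ((1 + ε/4) * (2*r))).IsClique S ∧
            ∀ T, (Stmt15.Hgr U X ((1 + ε/4) * (2*r))).IsClique T → S ⊆ T → S = T}) = ∅ := by
          ext S
          simp only [Set.mem_setOf_eq, Set.mem_empty_iff_false, iff_false, not_and]
          intro hne
          exfalso
          obtain ⟨a, _⟩ := hne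
          have hpos := Finset.card_pos.mpr ⟨a.1, a.2⟩
          omega
        rw [this]
        simp
      · calc ((Set.ncard _ : ℕ) : ℝ) ≤ ((X.card ^ U.card : ℕ) : ℝ) := by exact_mod_cast hcount
          _ = (X.card : ℝ) ^ (U.card : ℝ) := by
              push_cast
              rw [Real.rpow_natCast]
          _ ≤ (X.card : ℝ) ^ β := by
              apply Real.rpow_le_rpow_of_exponent_le _ hUcard
              exact_mod_cast h1
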